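/- arXiv:1009.2592 — 3 statements merged into one kernel-verified Lean document; each statement's English description precedes it below -/
import Mathlib

section
/- Let A be a separable C*-algebra, B a separable C*-algebra, and H_B the standard Hilbert B-module. Let ψ: A → L(H_B) be an absorbing representation and φ: A → L(H_B) any representation. Then there exists a sequence of isometries v_n ∈ L(H_B^(∞), H_B) such that for each a ∈ A: (i) v_n φ^(∞)(a) − ψ(a) v_n ∈ K(H_B^(∞), H_B) for all n, (ii) ‖v_n φ^(∞)(a) − ψ(a) v_n‖ → 0 as n → ∞, and (iii) v_j* v_i = 0 for i ≠ j. -/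
/-!
STATEMENT 0: Let `A` be a separable C*-algebra, `B` a separable C*-algebra, `H_B` the standard
Hilbert `B`-module, `ψ : A → L(H_B)` an absorbing representation and `φ : A → L(H_B)` any
representation.  Then there is a sequence of isometries `vₙ ∈ L(H_B^∞, H_B)` with
`vₙ φ^∞(a) − ψ(a) vₙ ∈ K(H_B^∞, H_B)`, `‖vₙ φ^∞(a) − ψ(a) vₙ‖ → 0`, and `vⱼ* vᵢ = 0` (`i ≠ j`).

Modeling: `L(H_B) = M(B⊗K)` and `K(H_B) = B⊗K`; we write `A₀` for the C*-algebra `B⊗K`, so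
`L(H_B)` is the multiplier algebra `𝓜(ℂ, A₀)` and `K(H_B)` is the canonical image of `A₀` in it
(`A₀` is separable iff `B` is).  The standard isomorphism `H_B^∞ ≅ H_B` is encoded by a sequence
`S` of isometries of `L(H_B)` with mutually orthogonal ranges summing strictly to `1`
(these exist in `L(H_B)`); under it, operators in `L(H_B^∞, H_B)` and `K(H_B^∞, H_B)` become
elements of `𝓜(ℂ, A₀)` resp. of the ideal, and `φ^∞ = φ ⊕ φ ⊕ ⋯` becomes the representation
`Φ = Σᵢ Sᵢ φ(·) Sᵢ*`, i.e. the unique representation with `Φ(a) Sᵢ = Sᵢ φ(a)` for all `i, a`.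
Representations are (automatically bounded) star-homomorphisms; a representation `ψ` is
absorbing when `ψ ⊕ σ` is approximately unitarily equivalent to `ψ` for every representation
`σ` (direct sums being implemented inside `L(H_B)` by any pair of cutting isometries).
-/

open MultiplierAlgebra Filter Topology

/-- The canonical ideal `A₀ = B⊗K = K(H_B)` inside `𝓜(ℂ, A₀) = L(H_B) = M(B⊗K)`. -/
def canonicalIdeal (A₀ : Type*) [NonUnitalCStarAlgebra A₀] : Set 𝓜(ℂ, A₀) :=
  Set.range (DoubleCentralizer.coe ℂ : A₀ → 𝓜(ℂ, A₀))

/-- The ranges of the isometries `S i` are mutually orthogonal and sum to `1` in the strict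
topology of the multiplier algebra. -/
def IsStrictCuttingSequence {A₀ : Type*} [NonUnitalCStarAlgebra A₀]
    (S : ℕ → 𝓜(ℂ, A₀)) : Prop :=
  (∀ i, star (S i) * S i = 1) ∧
  (∀ i j, i ≠ j → star (S i) * S j = 0) ∧
  (∀ a : A₀,
    Tendsto (fun N => ‖((1 : 𝓜(ℂ, A₀)) - ∑ i ∈ Finset.range N, S i * star (S i)) *
      DoubleCentralizer.coe ℂ a‖) atTop (nhds 0) ∧
    Tendsto (fun N => ‖DoubleCentralizer.coe ℂ a *
      ((1 : 𝓜(ℂ, A₀)) - ∑ i ∈ Finset.range N, S i * star (S i))‖) atTop (nhds 0))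

/-- Approximate unitary equivalence (with compact differences) of two maps `A → L(H_B)`. -/
def AUEquiv {A A₀ : Type*} [NonUnitalCStarAlgebra A] [NonUnitalCStarAlgebra A₀]
    (π σ : A → 𝓜(ℂ, A₀)) : Prop :=
  ∃ u : ℕ → 𝓜(ℂ, A₀), (∀ n, u n ∈ unitary 𝓜(ℂ, A₀)) ∧
    ∀ a : A,
      (∀ n, σ a - u n * π a * star (u n) ∈ canonicalIdeal A₀) ∧
      Tendsto (fun n => ‖σ a - u n * π a * star (u n)‖) atTop (nhds 0)

/-- `ψ` is an absorbing representation: for every representation `σ`, the direct sum `ψ ⊕ σ`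
(implemented by any pair of cutting isometries `s₁, s₂` of `L(H_B)`) is approximately unitarily
equivalent to `ψ`. -/
def Absorbing {A A₀ : Type*} [NonUnitalCStarAlgebra A] [NonUnitalCStarAlgebra A₀]
    (ψ : A →⋆ₙₐ[ℂ] 𝓜(ℂ, A₀)) : Prop :=
  ∀ σ : A →⋆ₙₐ[ℂ] 𝓜(ℂ, A₀), ∀ s₁ s₂ : 𝓜(ℂ, A₀),
    star s₁ * s₁ = 1 → star s₂ * s₂ = 1 → star s₁ * s₂ = 0 →
    s₁ * star s₁ + s₂ * star s₂ = 1 →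
    AUEquiv (fun a => s₁ * ψ a * star s₁ + s₂ * σ a * star s₂) ψ


namespace Stmt0Aux

set_option synthInstance.maxHeartbeats 1000000 in
set_option maxHeartbeats 1000000 in
lemma placeholder : True := trivial

set_option synthInstance.maxHeartbeats 1000000
set_option maxHeartbeats 1000000

variable {A₀ : Type*} [NonUnitalCStarAlgebra A₀]

noncomputable abbrev ιm : A₀ → 𝓜(ℂ, A₀) := DoubleCentralizer.coe ℂ

noncomputable def ιh : A₀ →⋆ₙₐ[ℂ] 𝓜(ℂ, A₀) := DoubleCentralizer.coeHom

lemma ιh_apply (x : A₀) : ιh x = ιm x := rfl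

lemma norm_ιm (x : A₀) : ‖ιm x‖ = ‖x‖ := by
  rw [← DoubleCentralizer.norm_fst]
  exact ContinuousLinearMap.opNorm_mul_apply ℂ A₀ x

lemma isometry_ιm : Isometry (ιm (A₀ := A₀)) := by
  have : Isometry (ιh (A₀ := A₀)) :=
    AddMonoidHomClass.isometry_of_norm ιh fun x => norm_ιm x
  exact this

lemma injective_ιm : Function.Injective (ιm (A₀ := A₀)) := isometry_ιm.injective

lemma eq_zero_of_mul_right {z : A₀} (h : ∀ y, z * y = 0) : z = 0 := by
  have h1 : ‖z‖ * ‖z‖ = 0 := by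
    rw [← CStarRing.norm_self_mul_star, h (star z), norm_zero]
  exact norm_eq_zero.mp (mul_self_eq_zero.mp h1)

lemma eq_zero_of_mul_left {z : A₀} (h : ∀ y, y * z = 0) : z = 0 := by
  have h1 : ‖z‖ * ‖z‖ = 0 := by
    rw [← CStarRing.norm_star_mul_self, h (star z), norm_zero]
  exact norm_eq_zero.mp (mul_self_eq_zero.mp h1)

lemma eq_of_mul_right {z w : A₀} (h : ∀ y, z * y = w * y) : z = w := by
  have := eq_zero_of_mul_right (z := z - w) (fun y => by rw [sub_mul, h, sub_self])
  exact sub_eq_zero.mp this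

lemma eq_of_mul_left {z w : A₀} (h : ∀ y, y * z = y * w) : z = w := by
  have := eq_zero_of_mul_left (z := z - w) (fun y => by rw [mul_sub, h, sub_self])
  exact sub_eq_zero.mp this

lemma fst_mul_right (m : 𝓜(ℂ, A₀)) (x y : A₀) : m.fst (x * y) = m.fst x * y := by
  apply eq_of_mul_left
  intro u
  calc u * m.fst (x * y) = m.snd u * (x * y) := (m.central u _).symm
    _ = m.snd u * x * y := (mul_assoc _ _ _).symm
    _ = u * m.fst x * y := by rw [m.central]
    _ = u * (m.fst x * y) := mul_assoc _ _ _

lemma snd_mul_left (m : 𝓜(ℂ, A₀)) (x y : A₀) : m.snd (y * x) = y * m.snd x := by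
  apply eq_of_mul_right
  intro u
  calc m.snd (y * x) * u = (y * x) * m.fst u := m.central _ _
    _ = y * (x * m.fst u) := mul_assoc _ _ _
    _ = y * (m.snd x * u) := by rw [m.central]
    _ = y * m.snd x * u := (mul_assoc _ _ _).symm

lemma mul_ιm (m : 𝓜(ℂ, A₀)) (x : A₀) : m * ιm x = ιm (m.fst x) := by
  refine DoubleCentralizer.ext _ _ _ _ (Prod.ext ?_ ?_)
  · refine ContinuousLinearMap.ext fun y => ?_
    show (m * ιm x).fst y = (ιm (m.fst x)).fst y
    rw [DoubleCentralizer.mul_fst]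
    show m.fst (x * y) = m.fst x * y
    exact fst_mul_right m x y
  · refine ContinuousLinearMap.ext fun y => ?_
    show (m * ιm x).snd y = (ιm (m.fst x)).snd y
    rw [DoubleCentralizer.mul_snd]
    show m.snd y * x = y * m.fst x
    exact m.central y x

lemma ιm_mul (x : A₀) (m : 𝓜(ℂ, A₀)) : ιm x * m = ιm (m.snd x) := by
  refine DoubleCentralizer.ext _ _ _ _ (Prod.ext ?_ ?_)
  · refine ContinuousLinearMap.ext fun y => ?_
    show (ιm x * m).fst y = (ιm (m.snd x)).fst y
    rw [DoubleCentralizer.mul_fst]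
    show x * m.fst y = m.snd x * y
    exact (m.central x y).symm
  · refine ContinuousLinearMap.ext fun y => ?_
    show (ιm x * m).snd y = (ιm (m.snd x)).snd y
    rw [DoubleCentralizer.mul_snd]
    show m.snd (y * x) = y * m.snd x
    exact snd_mul_left m x y

lemma ext_ιm {m m' : 𝓜(ℂ, A₀)} (h : ∀ x, m * ιm x = m' * ιm x) : m = m' := by
  have hfst : ∀ x, m.fst x = m'.fst x := fun x => by
    have := h x; rw [mul_ιm, mul_ιm] at this; exact injective_ιm this
  refine DoubleCentralizer.ext _ _ _ _ (Prod.ext ?_ ?_)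
  · exact ContinuousLinearMap.ext hfst
  · refine ContinuousLinearMap.ext fun y => ?_
    apply eq_of_mul_right
    intro u
    show m.snd y * u = m'.snd y * u
    rw [m.central, m'.central, hfst]

lemma ιm_star (x : A₀) : ιm (star x) = star (ιm x) := map_star ιh x

/-- Strict convergence tested against the canonical ideal. -/
def STo (f : ℕ → 𝓜(ℂ, A₀)) (m : 𝓜(ℂ, A₀)) : Prop :=
  ∀ x : A₀, Tendsto (fun N => f N * ιm x) atTop (𝓝 (m * ιm x)) ∧
    Tendsto (fun N => ιm x * f N) atTop (𝓝 (ιm x * m))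

lemma STo.unique {f : ℕ → 𝓜(ℂ, A₀)} {m m' : 𝓜(ℂ, A₀)} (hf : STo f m) (hf' : STo f m') :
    m = m' :=
  ext_ιm fun x => tendsto_nhds_unique (hf x).1 (hf' x).1

lemma STo.congr {f g : ℕ → 𝓜(ℂ, A₀)} {m : 𝓜(ℂ, A₀)} (h : ∀ N, f N = g N) (hf : STo f m) :
    STo g m := by
  have : f = g := funext h
  rwa [this] at hf

lemma STo.const (m : 𝓜(ℂ, A₀)) : STo (fun _ => m) m := fun _ =>
  ⟨tendsto_const_nhds, tendsto_const_nhds⟩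

lemma STo.add {f g : ℕ → 𝓜(ℂ, A₀)} {m k : 𝓜(ℂ, A₀)} (hf : STo f m) (hg : STo g k) :
    STo (fun N => f N + g N) (m + k) := fun x =>
  ⟨by simpa [add_mul] using (hf x).1.add (hg x).1,
   by simpa [mul_add] using (hf x).2.add (hg x).2⟩

lemma STo.star {f : ℕ → 𝓜(ℂ, A₀)} {m : 𝓜(ℂ, A₀)} (hf : STo f m) :
    STo (fun N => Star.star (f N)) (Star.star m) := by
  intro x
  constructor
  · have h := (continuous_star.tendsto _).comp (hf (Star.star x)).2
    have he : ∀ (z : 𝓜(ℂ, A₀)), Star.star (ιm (Star.star x) * z) = Star.star z * ιm x :=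
      fun z => by rw [star_mul, ← ιm_star, star_star]
    simp only [Function.comp_def, he] at h
    exact h
  · have h := (continuous_star.tendsto _).comp (hf (Star.star x)).1
    have he : ∀ (z : 𝓜(ℂ, A₀)), Star.star (z * ιm (Star.star x)) = ιm x * Star.star z :=
      fun z => by rw [star_mul, ← ιm_star, star_star]
    simp only [Function.comp_def, he] at h
    exact h

lemma STo.mul {f g : ℕ → 𝓜(ℂ, A₀)} {m k : 𝓜(ℂ, A₀)} {C D : ℝ}
    (hf : STo f m) (hg : STo g k) (hC : ∀ N, ‖f N‖ ≤ C) (hD : ∀ N, ‖g N‖ ≤ D) :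
    STo (fun N => f N * g N) (m * k) := by
  intro x
  constructor
  · have h1 : Tendsto (fun N => f N * (g N * ιm x) - f N * (k * ιm x)) atTop (𝓝 0) := by
      apply squeeze_zero_norm (a := fun N => C * ‖g N * ιm x - k * ιm x‖)
      · intro N
        rw [← mul_sub]
        exact (norm_mul_le _ _).trans
          (mul_le_mul_of_nonneg_right (hC N) (norm_nonneg _))
      · have hz : Tendsto (fun N => g N * ιm x - k * ιm x) atTop (𝓝 0) :=
          tendsto_sub_nhds_zero_iff.mpr (hg x).1
        have hn := tendsto_zero_iff_norm_tendsto_zero.mp hz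
        simpa using hn.const_mul C
    have h2 : Tendsto (fun N => f N * (k * ιm x)) atTop (𝓝 (m * (k * ιm x))) := by
      rw [mul_ιm k x]
      exact (hf (k.fst x)).1
    have h3 := h1.add h2
    rw [zero_add] at h3
    simp only [sub_add_cancel] at h3
    have he : (fun N => f N * (g N * ιm x)) = fun N => f N * g N * ιm x := by
      funext N; rw [mul_assoc]
    rw [he] at h3
    rw [mul_assoc]
    exact h3
  · have h1 : Tendsto (fun N => ιm x * f N * g N - ιm x * m * g N) atTop (𝓝 0) := by
      apply squeeze_zero_norm (a := fun N => ‖ιm x * f N - ιm x * m‖ * D)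
      · intro N
        rw [← sub_mul]
        exact (norm_mul_le _ _).trans
          (mul_le_mul_of_nonneg_left (hD N) (norm_nonneg _))
      · have hz : Tendsto (fun N => ιm x * f N - ιm x * m) atTop (𝓝 0) :=
          tendsto_sub_nhds_zero_iff.mpr (hf x).2
        have hn := tendsto_zero_iff_norm_tendsto_zero.mp hz
        simpa using hn.mul_const D
    have h2 : Tendsto (fun N => ιm x * m * g N) atTop (𝓝 (ιm x * m * k)) := by
      rw [ιm_mul x m]
      exact (hg (m.snd x)).2
    have h3 := h1.add h2
    rw [zero_add] at h3
    simp only [sub_add_cancel] at h3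
    have he : (fun N => ιm x * f N * g N) = fun N => ιm x * (f N * g N) := by
      funext N; rw [mul_assoc]
    rw [he] at h3
    rw [← mul_assoc]
    exact h3

variable {S : ℕ → 𝓜(ℂ, A₀)}

section FiniteSums

variable (hS1 : ∀ i, star (S i) * S i = 1)
variable (hS2 : ∀ i j, i ≠ j → star (S i) * S j = 0)

include hS1 hS2 in
lemma K1 {q : ℕ → ℕ} (hq : Function.Injective q) (s : Finset ℕ) :
    star (∑ m ∈ s, S (q m) * star (S m)) * ∑ m ∈ s, S (q m) * star (S m)
      = ∑ m ∈ s, S m * star (S m) := by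
  rw [star_sum, Finset.sum_mul_sum]
  refine Finset.sum_congr rfl fun m hm => ?_
  rw [Finset.sum_eq_single_of_mem m hm]
  · rw [star_mul, star_star, mul_assoc, ← mul_assoc (star (S (q m))), hS1, one_mul]
  · intro b hb hbm
    have h0 : star (S (q m)) * S (q b) = 0 := hS2 _ _ fun h => hbm (hq h).symm
    rw [star_mul, star_star, mul_assoc, ← mul_assoc (star (S (q m))), h0, zero_mul, mul_zero]

include hS2 in
lemma K2 {q q' : ℕ → ℕ} (h : ∀ m m', q m ≠ q' m') (s t : Finset ℕ) :
    star (∑ m ∈ s, S (q m) * star (S m)) * ∑ m ∈ t, S (q' m) * star (S m) = 0 := by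
  rw [star_sum, Finset.sum_mul_sum]
  refine Finset.sum_eq_zero fun m hm => Finset.sum_eq_zero fun b hb => ?_
  have h0 : star (S (q m)) * S (q' b) = 0 := hS2 _ _ (h m b)
  rw [star_mul, star_star, mul_assoc, ← mul_assoc (star (S (q m))), h0, zero_mul, mul_zero]

include hS1 hS2 in
lemma K3 (q : ℕ → ℕ) (s : Finset ℕ) :
    (∑ m ∈ s, S (q m) * star (S m)) * star (∑ m ∈ s, S (q m) * star (S m))
      = ∑ m ∈ s, S (q m) * star (S (q m)) := by
  rw [star_sum, Finset.sum_mul_sum]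
  refine Finset.sum_congr rfl fun m hm => ?_
  rw [Finset.sum_eq_single_of_mem m hm]
  · rw [star_mul, star_star, mul_assoc, ← mul_assoc (star (S m)), hS1, one_mul]
  · intro b hb hbm
    have h0 : star (S m) * S b = 0 := hS2 _ _ (Ne.symm hbm)
    rw [star_mul, star_star, mul_assoc, ← mul_assoc (star (S m)), h0, zero_mul, mul_zero]

include hS2 in
lemma K5a {q : ℕ → ℕ} {n : ℕ} (s : Finset ℕ) (hbound : ∀ m ∈ s, n ≤ q m) :
    (∑ i ∈ Finset.range n, S i * star (S i)) * ∑ m ∈ s, S (q m) * star (S m) = 0 := by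
  rw [Finset.sum_mul_sum]
  refine Finset.sum_eq_zero fun i hi => Finset.sum_eq_zero fun m hm => ?_
  have h0 : star (S i) * S (q m) = 0 := by
    refine hS2 _ _ ?_
    have := hbound m hm
    have := Finset.mem_range.mp hi
    omega
  rw [mul_assoc, ← mul_assoc (star (S i)), h0, zero_mul, mul_zero]

include hS2 in
lemma K5b {q : ℕ → ℕ} {n : ℕ} (s : Finset ℕ) (hbound : ∀ m ∈ s, n ≤ m) :
    (∑ m ∈ s, S (q m) * star (S m)) * ∑ i ∈ Finset.range n, S i * star (S i) = 0 := by
  rw [Finset.sum_mul_sum]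
  refine Finset.sum_eq_zero fun m hm => Finset.sum_eq_zero fun i hi => ?_
  have h0 : star (S m) * S i = 0 := by
    refine hS2 _ _ ?_
    have := hbound m hm
    have := Finset.mem_range.mp hi
    omega
  rw [mul_assoc, ← mul_assoc (star (S m)), h0, zero_mul, mul_zero]

include hS1 hS2 in
lemma Knorm {q : ℕ → ℕ} (hq : Function.Injective q) (s : Finset ℕ) :
    ‖∑ m ∈ s, S (q m) * star (S m)‖ ≤ 1 := by
  have hstar : star (∑ m ∈ s, S m * star (S m)) = ∑ m ∈ s, S m * star (S m) := by
    rw [star_sum]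
    refine Finset.sum_congr rfl fun m _ => ?_
    rw [star_mul, star_star]
  have hidem : (∑ m ∈ s, S m * star (S m)) * ∑ m ∈ s, S m * star (S m)
      = ∑ m ∈ s, S m * star (S m) := by
    have h := K1 hS1 hS2 (q := id) Function.injective_id s
    simp only [id] at h
    rw [hstar] at h
    exact h
  have hple : ‖∑ m ∈ s, S m * star (S m)‖ ≤ 1 := by
    have h := CStarRing.norm_star_mul_self (x := ∑ m ∈ s, S m * star (S m))
    rw [hstar, hidem] at h
    nlinarith [norm_nonneg (∑ m ∈ s, S m * star (S m)),
      sq_nonneg (‖∑ m ∈ s, S m * star (S m)‖ - 1)]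
  have h2 : ‖∑ m ∈ s, S (q m) * star (S m)‖ * ‖∑ m ∈ s, S (q m) * star (S m)‖
      = ‖∑ m ∈ s, S m * star (S m)‖ := by
    rw [← CStarRing.norm_star_mul_self, K1 hS1 hS2 hq s]
  nlinarith [norm_nonneg (∑ m ∈ s, S (q m) * star (S m))]

end FiniteSums

lemma starS_mul {A : Type*} [NonUnitalCStarAlgebra A] (Φ φ : A →⋆ₙₐ[ℂ] 𝓜(ℂ, A₀))
    (hΦ : ∀ (a : A) (i : ℕ), Φ a * S i = S i * φ a) (a : A) (i : ℕ) :
    star (S i) * Φ a = φ a * star (S i) := by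
  have h1 : star (Φ a) * S i = S i * star (φ a) := by
    rw [← map_star, ← map_star, hΦ]
  calc star (S i) * Φ a = star (star (Φ a) * S i) := by rw [star_mul, star_star]
    _ = star (S i * star (φ a)) := by rw [h1]
    _ = φ a * star (S i) := by rw [star_mul, star_star]

lemma K4 {A : Type*} [NonUnitalCStarAlgebra A] (Φ φ : A →⋆ₙₐ[ℂ] 𝓜(ℂ, A₀))
    (hΦ : ∀ (a : A) (i : ℕ), Φ a * S i = S i * φ a) (a : A) (q : ℕ → ℕ) (s : Finset ℕ) :
    (∑ m ∈ s, S (q m) * star (S m)) * Φ a = Φ a * ∑ m ∈ s, S (q m) * star (S m) := by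
  rw [Finset.sum_mul, Finset.mul_sum]
  refine Finset.sum_congr rfl fun m _ => ?_
  rw [mul_assoc, starS_mul Φ φ hΦ a m, ← mul_assoc, ← hΦ a (q m), mul_assoc]

lemma sum_even_odd {M : Type*} [AddCommMonoid M] (f : ℕ → M) (N : ℕ) :
    (∑ m ∈ Finset.range N, f (2 * m)) + ∑ m ∈ Finset.range N, f (2 * m + 1)
      = ∑ k ∈ Finset.range (2 * N), f k := by
  induction N with
  | zero => simp
  | succ n ih =>
    have h2n : 2 * (n + 1) = 2 * n + 1 + 1 := by ring
    rw [Finset.sum_range_succ, Finset.sum_range_succ (f := fun m => f (2 * m + 1)), h2n,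
      Finset.sum_range_succ, Finset.sum_range_succ, ← ih]
    abel

lemma STo_P
    (hS3 : ∀ a : A₀,
      Tendsto (fun N => ‖((1 : 𝓜(ℂ, A₀)) - ∑ i ∈ Finset.range N, S i * star (S i)) * ιm a‖)
        atTop (𝓝 0) ∧
      Tendsto (fun N => ‖ιm a * ((1 : 𝓜(ℂ, A₀)) - ∑ i ∈ Finset.range N, S i * star (S i))‖)
        atTop (𝓝 0)) :
    STo (fun N => ∑ i ∈ Finset.range N, S i * star (S i)) (1 : 𝓜(ℂ, A₀)) := by
  intro x
  constructor
  · have h : Tendsto (fun N => (∑ i ∈ Finset.range N, S i * star (S i)) * ιm x - ιm x)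
        atTop (𝓝 0) := by
      apply squeeze_zero_norm
        (a := fun N => ‖((1 : 𝓜(ℂ, A₀)) - ∑ i ∈ Finset.range N, S i * star (S i)) * ιm x‖)
      · intro N
        have he : (∑ i ∈ Finset.range N, S i * star (S i)) * ιm x - ιm x
            = -(((1 : 𝓜(ℂ, A₀)) - ∑ i ∈ Finset.range N, S i * star (S i)) * ιm x) := by
          rw [sub_mul, one_mul, neg_sub]
        rw [he, norm_neg]
      · exact (hS3 x).1
    have h2 := tendsto_sub_nhds_zero_iff.mp h
    rw [one_mul]
    exact h2
  · have h : Tendsto (fun N => ιm x * ∑ i ∈ Finset.range N, S i * star (S i) - ιm x)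
        atTop (𝓝 0) := by
      apply squeeze_zero_norm
        (a := fun N => ‖ιm x * ((1 : 𝓜(ℂ, A₀)) - ∑ i ∈ Finset.range N, S i * star (S i))‖)
      · intro N
        have he : ιm x * ∑ i ∈ Finset.range N, S i * star (S i) - ιm x
            = -(ιm x * ((1 : 𝓜(ℂ, A₀)) - ∑ i ∈ Finset.range N, S i * star (S i))) := by
          rw [mul_sub, mul_one, neg_sub]
        rw [he, norm_neg]
      · exact (hS3 x).2
    have h2 := tendsto_sub_nhds_zero_iff.mp h
    rw [mul_one]
    exact h2

lemma exists_strictSum (hS1 : ∀ i, star (S i) * S i = 1)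
    (hS2 : ∀ i j, i ≠ j → star (S i) * S j = 0)
    (hS3 : ∀ a : A₀,
      Tendsto (fun N => ‖((1 : 𝓜(ℂ, A₀)) - ∑ i ∈ Finset.range N, S i * star (S i)) * ιm a‖)
        atTop (𝓝 0) ∧
      Tendsto (fun N => ‖ιm a * ((1 : 𝓜(ℂ, A₀)) - ∑ i ∈ Finset.range N, S i * star (S i))‖)
        atTop (𝓝 0))
    {q : ℕ → ℕ} (hq : Function.Injective q) (hq2 : ∀ m, m ≤ q m) :
    ∃ T : 𝓜(ℂ, A₀), ‖T‖ ≤ 1 ∧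
      STo (fun N => ∑ m ∈ Finset.range N, S (q m) * star (S m)) T := by
  have hGnorm : ∀ N : ℕ, ‖∑ m ∈ Finset.range N, S (q m) * star (S m)‖ ≤ 1 :=
    fun N => Knorm hS1 hS2 hq _
  have hmem : ∀ {K n m : ℕ}, m ∈ Finset.range n \ Finset.range K → K ≤ m := by
    intro K n m hm
    have h1 := Finset.mem_sdiff.mp hm
    have h2 : ¬ m < K := fun hc => h1.2 (Finset.mem_range.mpr hc)
    omega
  have hdiff : ∀ {K n : ℕ}, K ≤ n →
      (∑ m ∈ Finset.range n, S (q m) * star (S m)) -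
        (∑ m ∈ Finset.range K, S (q m) * star (S m))
      = ∑ m ∈ Finset.range n \ Finset.range K, S (q m) * star (S m) := by
    intro K n h
    rw [Finset.sum_sdiff_eq_sub (Finset.range_subset_range.mpr h)]
  have hcauL : ∀ x : A₀, CauchySeq (fun N => (∑ m ∈ Finset.range N, S (q m) * star (S m)).fst x) := by
    intro x
    rw [Metric.cauchySeq_iff']
    intro ε hε
    obtain ⟨K, hK⟩ := (Metric.tendsto_atTop.mp (hS3 x).1) ε hε
    refine ⟨K, fun n hn => ?_⟩
    have hKK := hK K le_rfl
    rw [Real.dist_eq, sub_zero, abs_of_nonneg (norm_nonneg _)] at hKK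
    rw [dist_eq_norm]
    have hsub : (∑ m ∈ Finset.range n, S (q m) * star (S m)).fst x -
        (∑ m ∈ Finset.range K, S (q m) * star (S m)).fst x
        = (∑ m ∈ Finset.range n \ Finset.range K, S (q m) * star (S m)).fst x := by
      rw [← hdiff hn, DoubleCentralizer.sub_fst, ContinuousLinearMap.sub_apply]
    rw [hsub]
    have h2 : ‖(∑ m ∈ Finset.range n \ Finset.range K, S (q m) * star (S m)).fst x‖
        = ‖(∑ m ∈ Finset.range n \ Finset.range K, S (q m) * star (S m)) * ιm x‖ := by
      rw [mul_ιm, norm_ιm]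
    have h3 : (∑ m ∈ Finset.range n \ Finset.range K, S (q m) * star (S m)) * ιm x
        = (∑ m ∈ Finset.range n \ Finset.range K, S (q m) * star (S m)) *
          (((1 : 𝓜(ℂ, A₀)) - ∑ i ∈ Finset.range K, S i * star (S i)) * ιm x) := by
      rw [← mul_assoc, mul_sub, mul_one,
        K5b hS2 _ (fun m hm => hmem hm), sub_zero]
    calc ‖(∑ m ∈ Finset.range n \ Finset.range K, S (q m) * star (S m)).fst x‖
        = ‖(∑ m ∈ Finset.range n \ Finset.range K, S (q m) * star (S m)) *
            (((1 : 𝓜(ℂ, A₀)) - ∑ i ∈ Finset.range K, S i * star (S i)) * ιm x)‖ := by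
          rw [h2, h3]
      _ ≤ ‖(∑ m ∈ Finset.range n \ Finset.range K, S (q m) * star (S m))‖ *
            ‖((1 : 𝓜(ℂ, A₀)) - ∑ i ∈ Finset.range K, S i * star (S i)) * ιm x‖ :=
          norm_mul_le _ _
      _ ≤ 1 * ‖((1 : 𝓜(ℂ, A₀)) - ∑ i ∈ Finset.range K, S i * star (S i)) * ιm x‖ :=
          mul_le_mul_of_nonneg_right (Knorm hS1 hS2 hq _) (norm_nonneg _)
      _ = ‖((1 : 𝓜(ℂ, A₀)) - ∑ i ∈ Finset.range K, S i * star (S i)) * ιm x‖ := one_mul _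
      _ < ε := hKK
  have hcauR : ∀ x : A₀, CauchySeq (fun N => (∑ m ∈ Finset.range N, S (q m) * star (S m)).snd x) := by
    intro x
    rw [Metric.cauchySeq_iff']
    intro ε hε
    obtain ⟨K, hK⟩ := (Metric.tendsto_atTop.mp (hS3 x).2) ε hε
    refine ⟨K, fun n hn => ?_⟩
    have hKK := hK K le_rfl
    rw [Real.dist_eq, sub_zero, abs_of_nonneg (norm_nonneg _)] at hKK
    rw [dist_eq_norm]
    have hsub : (∑ m ∈ Finset.range n, S (q m) * star (S m)).snd x -
        (∑ m ∈ Finset.range K, S (q m) * star (S m)).snd x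
        = (∑ m ∈ Finset.range n \ Finset.range K, S (q m) * star (S m)).snd x := by
      rw [← hdiff hn, DoubleCentralizer.sub_snd, ContinuousLinearMap.sub_apply]
    rw [hsub]
    have h2 : ‖(∑ m ∈ Finset.range n \ Finset.range K, S (q m) * star (S m)).snd x‖
        = ‖ιm x * (∑ m ∈ Finset.range n \ Finset.range K, S (q m) * star (S m))‖ := by
      rw [ιm_mul, norm_ιm]
    have h3 : ιm x * (∑ m ∈ Finset.range n \ Finset.range K, S (q m) * star (S m))
        = (ιm x * ((1 : 𝓜(ℂ, A₀)) - ∑ i ∈ Finset.range K, S i * star (S i))) *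
          (∑ m ∈ Finset.range n \ Finset.range K, S (q m) * star (S m)) := by
      rw [mul_assoc, sub_mul, one_mul,
        K5a hS2 _ (fun m hm => le_trans (hmem hm) (hq2 m)), sub_zero]
    calc ‖(∑ m ∈ Finset.range n \ Finset.range K, S (q m) * star (S m)).snd x‖
        = ‖(ιm x * ((1 : 𝓜(ℂ, A₀)) - ∑ i ∈ Finset.range K, S i * star (S i))) *
            (∑ m ∈ Finset.range n \ Finset.range K, S (q m) * star (S m))‖ := by
          rw [h2, h3]
      _ ≤ ‖ιm x * ((1 : 𝓜(ℂ, A₀)) - ∑ i ∈ Finset.range K, S i * star (S i))‖ *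
            ‖∑ m ∈ Finset.range n \ Finset.range K, S (q m) * star (S m)‖ :=
          norm_mul_le _ _
      _ ≤ ‖ιm x * ((1 : 𝓜(ℂ, A₀)) - ∑ i ∈ Finset.range K, S i * star (S i))‖ * 1 :=
          mul_le_mul_of_nonneg_left (Knorm hS1 hS2 hq _) (norm_nonneg _)
      _ = ‖ιm x * ((1 : 𝓜(ℂ, A₀)) - ∑ i ∈ Finset.range K, S i * star (S i))‖ := mul_one _
      _ < ε := hKK
  choose Lf hLf using fun x => cauchySeq_tendsto_of_complete (hcauL x)
  choose Rf hRf using fun x => cauchySeq_tendsto_of_complete (hcauR x)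
  have hLadd : ∀ x y, Lf (x + y) = Lf x + Lf y := by
    intro x y
    refine tendsto_nhds_unique (hLf (x + y)) ?_
    have h := (hLf x).add (hLf y)
    have he : (fun N => (∑ m ∈ Finset.range N, S (q m) * star (S m)).fst x +
        (∑ m ∈ Finset.range N, S (q m) * star (S m)).fst y)
        = fun N => (∑ m ∈ Finset.range N, S (q m) * star (S m)).fst (x + y) :=
      funext fun N => (map_add _ x y).symm
    rwa [he] at h
  have hLsmul : ∀ (c : ℂ) (x), Lf (c • x) = c • Lf x := by
    intro c x
    refine tendsto_nhds_unique (hLf (c • x)) ?_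
    have h := (hLf x).const_smul c
    have he : (fun N => c • (∑ m ∈ Finset.range N, S (q m) * star (S m)).fst x)
        = fun N => (∑ m ∈ Finset.range N, S (q m) * star (S m)).fst (c • x) :=
      funext fun N => (map_smul _ c x).symm
    rwa [he] at h
  have hLbd : ∀ x, ‖Lf x‖ ≤ 1 * ‖x‖ := by
    intro x
    refine le_of_tendsto (hLf x).norm (Eventually.of_forall fun N => ?_)
    refine le_trans ((∑ m ∈ Finset.range N, S (q m) * star (S m)).fst.le_opNorm x) ?_
    rw [DoubleCentralizer.norm_fst]
    exact mul_le_mul_of_nonneg_right (hGnorm N) (norm_nonneg x)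
  have hRadd : ∀ x y, Rf (x + y) = Rf x + Rf y := by
    intro x y
    refine tendsto_nhds_unique (hRf (x + y)) ?_
    have h := (hRf x).add (hRf y)
    have he : (fun N => (∑ m ∈ Finset.range N, S (q m) * star (S m)).snd x +
        (∑ m ∈ Finset.range N, S (q m) * star (S m)).snd y)
        = fun N => (∑ m ∈ Finset.range N, S (q m) * star (S m)).snd (x + y) :=
      funext fun N => (map_add _ x y).symm
    rwa [he] at h
  have hRsmul : ∀ (c : ℂ) (x), Rf (c • x) = c • Rf x := by
    intro c x
    refine tendsto_nhds_unique (hRf (c • x)) ?_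
    have h := (hRf x).const_smul c
    have he : (fun N => c • (∑ m ∈ Finset.range N, S (q m) * star (S m)).snd x)
        = fun N => (∑ m ∈ Finset.range N, S (q m) * star (S m)).snd (c • x) :=
      funext fun N => (map_smul _ c x).symm
    rwa [he] at h
  have hRbd : ∀ x, ‖Rf x‖ ≤ 1 * ‖x‖ := by
    intro x
    refine le_of_tendsto (hRf x).norm (Eventually.of_forall fun N => ?_)
    refine le_trans ((∑ m ∈ Finset.range N, S (q m) * star (S m)).snd.le_opNorm x) ?_
    rw [DoubleCentralizer.norm_snd]
    exact mul_le_mul_of_nonneg_right (hGnorm N) (norm_nonneg x)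
  let L : A₀ →L[ℂ] A₀ := LinearMap.mkContinuous
    { toFun := Lf, map_add' := hLadd, map_smul' := fun c x => hLsmul c x } 1 hLbd
  let R : A₀ →L[ℂ] A₀ := LinearMap.mkContinuous
    { toFun := Rf, map_add' := hRadd, map_smul' := fun c x => hRsmul c x } 1 hRbd
  have hcentral : ∀ x y : A₀, R x * y = x * L y := by
    intro x y
    have h1 : Tendsto (fun N => (∑ m ∈ Finset.range N, S (q m) * star (S m)).snd x * y)
        atTop (𝓝 (Rf x * y)) := (hRf x).mul tendsto_const_nhds
    have h2 : Tendsto (fun N => x * (∑ m ∈ Finset.range N, S (q m) * star (S m)).fst y)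
        atTop (𝓝 (x * Lf y)) := tendsto_const_nhds.mul (hLf y)
    have he : (fun N => (∑ m ∈ Finset.range N, S (q m) * star (S m)).snd x * y)
        = fun N => x * (∑ m ∈ Finset.range N, S (q m) * star (S m)).fst y :=
      funext fun N => (∑ m ∈ Finset.range N, S (q m) * star (S m)).central x y
    rw [he] at h1
    exact tendsto_nhds_unique h1 h2
  refine ⟨⟨(L, R), hcentral⟩, ?_, ?_⟩
  · rw [← DoubleCentralizer.norm_fst]
    exact LinearMap.mkContinuous_norm_le _ zero_le_one hLbd
  · intro x
    constructor
    · rw [mul_ιm]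
      have h := (isometry_ιm.continuous.tendsto (Lf x)).comp (hLf x)
      have he : (fun N => ιm ((∑ m ∈ Finset.range N, S (q m) * star (S m)).fst x))
          = fun N => (∑ m ∈ Finset.range N, S (q m) * star (S m)) * ιm x :=
        funext fun N => (mul_ιm _ _).symm
      rw [Function.comp_def, he] at h
      exact h
    · rw [ιm_mul]
      have h := (isometry_ιm.continuous.tendsto (Rf x)).comp (hRf x)
      have he : (fun N => ιm ((∑ m ∈ Finset.range N, S (q m) * star (S m)).snd x))
          = fun N => ιm x * (∑ m ∈ Finset.range N, S (q m) * star (S m)) :=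
        funext fun N => (ιm_mul _ _).symm
      rw [Function.comp_def, he] at h
      exact h

end Stmt0Aux
theorem stmt0 {A A₀ : Type*}
    [NonUnitalCStarAlgebra A] [TopologicalSpace.SeparableSpace A]
    [NonUnitalCStarAlgebra A₀] [TopologicalSpace.SeparableSpace A₀]
    (ψ φ : A →⋆ₙₐ[ℂ] 𝓜(ℂ, A₀)) (hψ : Absorbing ψ)
    (S : ℕ → 𝓜(ℂ, A₀)) (hS : IsStrictCuttingSequence S)
    (Φ : A →⋆ₙₐ[ℂ] 𝓜(ℂ, A₀)) (hΦ : ∀ (a : A) (i : ℕ), Φ a * S i = S i * φ a) :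
    ∃ v : ℕ → 𝓜(ℂ, A₀),
      (∀ n, star (v n) * v n = 1) ∧
      (∀ i j, i ≠ j → star (v j) * v i = 0) ∧
      ∀ a : A,
        (∀ n, v n * Φ a - ψ a * v n ∈ canonicalIdeal A₀) ∧
        Tendsto (fun n => ‖v n * Φ a - ψ a * v n‖) atTop (nhds 0) := by
  classical
  open Stmt0Aux in
  obtain ⟨hS1, hS2, hS3⟩ := hS
  have hS3' : ∀ a : A₀,
      Tendsto (fun N => ‖((1 : 𝓜(ℂ, A₀)) - ∑ i ∈ Finset.range N, S i * star (S i)) * ιm a‖)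
        atTop (𝓝 0) ∧
      Tendsto (fun N => ‖ιm a * ((1 : 𝓜(ℂ, A₀)) - ∑ i ∈ Finset.range N, S i * star (S i))‖)
        atTop (𝓝 0) := hS3
  have hq1 : Function.Injective (fun m : ℕ => 2 * m) := by
    intro a b h
    have h' : 2 * a = 2 * b := h
    omega
  have hq1' : ∀ m : ℕ, m ≤ 2 * m := fun m => by omega
  have hq2 : Function.Injective (fun m : ℕ => 2 * m + 1) := by
    intro a b h
    have h' : 2 * a + 1 = 2 * b + 1 := h
    omega
  have hq2' : ∀ m : ℕ, m ≤ 2 * m + 1 := fun m => by omega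
  have hqp : ∀ n : ℕ, Function.Injective (Nat.pair n) :=
    fun n a b h => (Nat.pair_eq_pair.mp h).2
  obtain ⟨s₁, hs₁n, hs₁⟩ := exists_strictSum hS1 hS2 hS3' hq1 hq1'
  obtain ⟨s₂, hs₂n, hs₂⟩ := exists_strictSum hS1 hS2 hS3' hq2 hq2'
  choose T hTn hT using fun n : ℕ =>
    exists_strictSum hS1 hS2 hS3' (hqp n) (fun m => Nat.right_le_pair n m)
  have hP1 := STo_P hS3'
  have hbG : ∀ (q : ℕ → ℕ), Function.Injective q → ∀ N : ℕ,
      ‖∑ m ∈ Finset.range N, S (q m) * star (S m)‖ ≤ 1 :=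
    fun q hq N => Knorm hS1 hS2 hq _
  have hbGstar : ∀ (q : ℕ → ℕ), Function.Injective q → ∀ N : ℕ,
      ‖star (∑ m ∈ Finset.range N, S (q m) * star (S m))‖ ≤ 1 :=
    fun q hq N => by rw [norm_star]; exact hbG q hq N
  -- isometry relations
  have hiso : ∀ (qf : ℕ → ℕ), Function.Injective qf → ∀ T₀ : 𝓜(ℂ, A₀),
      STo (fun N => ∑ m ∈ Finset.range N, S (qf m) * star (S m)) T₀ →
      star T₀ * T₀ = 1 := by
    intro qf hqf T₀ hT₀
    have h1 : STo (fun N => star (∑ m ∈ Finset.range N, S (qf m) * star (S m)) *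
        ∑ m ∈ Finset.range N, S (qf m) * star (S m)) (star T₀ * T₀) :=
      hT₀.star.mul hT₀ (hbGstar qf hqf) (hbG qf hqf)
    have h2 : STo (fun N => star (∑ m ∈ Finset.range N, S (qf m) * star (S m)) *
        ∑ m ∈ Finset.range N, S (qf m) * star (S m)) (1 : 𝓜(ℂ, A₀)) :=
      STo.congr (fun N => (K1 hS1 hS2 hqf (Finset.range N)).symm) hP1
    exact h1.unique h2
  have hs₁iso := hiso _ hq1 s₁ hs₁
  have hs₂iso := hiso _ hq2 s₂ hs₂
  have hTiso : ∀ n, star (T n) * T n = 1 := fun n => hiso _ (hqp n) (T n) (hT n)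
  -- orthogonality of s₁ and s₂
  have horth : star s₁ * s₂ = 0 := by
    have h1 : STo (fun N => star (∑ m ∈ Finset.range N, S (2 * m) * star (S m)) *
        ∑ m ∈ Finset.range N, S (2 * m + 1) * star (S m)) (star s₁ * s₂) :=
      hs₁.star.mul hs₂ (hbGstar _ hq1) (hbG _ hq2)
    have h2 : STo (fun N => star (∑ m ∈ Finset.range N, S (2 * m) * star (S m)) *
        ∑ m ∈ Finset.range N, S (2 * m + 1) * star (S m)) (0 : 𝓜(ℂ, A₀)) :=
      STo.congr (fun N => (K2 hS2 (fun m m' => by omega) _ _).symm) (STo.const 0)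
    exact h1.unique h2
  -- orthogonality of the T's
  have hTorth : ∀ i j, i ≠ j → star (T j) * T i = 0 := by
    intro i j hij
    have h1 : STo (fun N => star (∑ m ∈ Finset.range N, S (Nat.pair j m) * star (S m)) *
        ∑ m ∈ Finset.range N, S (Nat.pair i m) * star (S m)) (star (T j) * T i) :=
      (hT j).star.mul (hT i) (hbGstar _ (hqp j)) (hbG _ (hqp i))
    have h2 : STo (fun N => star (∑ m ∈ Finset.range N, S (Nat.pair j m) * star (S m)) *
        ∑ m ∈ Finset.range N, S (Nat.pair i m) * star (S m)) (0 : 𝓜(ℂ, A₀)) := by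
      refine STo.congr (fun N => (K2 hS2 (fun m m' hc => ?_) _ _).symm) (STo.const 0)
      exact hij ((Nat.pair_eq_pair.mp hc).1).symm
    exact h1.unique h2
  -- ranges of s₁ and s₂ sum to one
  have hsum : s₁ * star s₁ + s₂ * star s₂ = 1 := by
    have h1 : STo (fun N =>
        (∑ m ∈ Finset.range N, S (2 * m) * star (S m)) *
          star (∑ m ∈ Finset.range N, S (2 * m) * star (S m)) +
        (∑ m ∈ Finset.range N, S (2 * m + 1) * star (S m)) *
          star (∑ m ∈ Finset.range N, S (2 * m + 1) * star (S m)))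
        (s₁ * star s₁ + s₂ * star s₂) :=
      (hs₁.mul hs₁.star (hbG _ hq1) (hbGstar _ hq1)).add
        (hs₂.mul hs₂.star (hbG _ hq2) (hbGstar _ hq2))
    have h3 : STo (fun N => ∑ k ∈ Finset.range (2 * N), S k * star (S k)) (1 : 𝓜(ℂ, A₀)) := by
      intro x
      have h2N : Tendsto (fun N : ℕ => 2 * N) atTop atTop :=
        tendsto_atTop_mono (fun n => (by omega : n ≤ 2 * n)) tendsto_id
      exact ⟨(hP1 x).1.comp h2N, (hP1 x).2.comp h2N⟩
    have h4 : STo (fun N =>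
        (∑ m ∈ Finset.range N, S (2 * m) * star (S m)) *
          star (∑ m ∈ Finset.range N, S (2 * m) * star (S m)) +
        (∑ m ∈ Finset.range N, S (2 * m + 1) * star (S m)) *
          star (∑ m ∈ Finset.range N, S (2 * m + 1) * star (S m)))
        (1 : 𝓜(ℂ, A₀)) := by
      refine STo.congr (fun N => ?_) h3
      rw [K3 hS1 hS2 (fun m => 2 * m) (Finset.range N),
        K3 hS1 hS2 (fun m => 2 * m + 1) (Finset.range N)]
      exact (sum_even_odd (fun k => S k * star (S k)) N).symm
    exact h1.unique h4
  -- the T's commute with Φ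
  have hTΦ : ∀ (a : A) (n : ℕ), T n * Φ a = Φ a * T n := by
    intro a n
    have h1 : STo (fun N => (∑ m ∈ Finset.range N, S (Nat.pair n m) * star (S m)) * Φ a)
        (T n * Φ a) :=
      (hT n).mul (STo.const (Φ a)) (hbG _ (hqp n)) (fun N => le_refl ‖Φ a‖)
    have h2 : STo (fun N => Φ a * ∑ m ∈ Finset.range N, S (Nat.pair n m) * star (S m))
        (Φ a * T n) :=
      (STo.const (Φ a)).mul (hT n) (fun N => le_refl ‖Φ a‖) (hbG _ (hqp n))
    exact (STo.congr (fun N => K4 Φ φ hΦ a (Nat.pair n) (Finset.range N)) h1).unique h2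
  -- T n is supported away from the first n range projections
  have hPT : ∀ n : ℕ, (∑ i ∈ Finset.range n, S i * star (S i)) * T n = 0 := by
    intro n
    have h1 : STo (fun N => (∑ i ∈ Finset.range n, S i * star (S i)) *
        ∑ m ∈ Finset.range N, S (Nat.pair n m) * star (S m))
        ((∑ i ∈ Finset.range n, S i * star (S i)) * T n) :=
      (STo.const _).mul (hT n) (fun N => le_refl _) (hbG _ (hqp n))
    have h2 : STo (fun N => (∑ i ∈ Finset.range n, S i * star (S i)) *
        ∑ m ∈ Finset.range N, S (Nat.pair n m) * star (S m)) (0 : 𝓜(ℂ, A₀)) :=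
      STo.congr
        (fun N => (K5a hS2 (Finset.range N) (fun m _ => Nat.left_le_pair n m)).symm)
        (STo.const 0)
    exact h1.unique h2
  have hQT : ∀ n : ℕ,
      ((1 : 𝓜(ℂ, A₀)) - ∑ i ∈ Finset.range n, S i * star (S i)) * T n = T n := by
    intro n
    rw [sub_mul, one_mul, hPT n, sub_zero]
  -- absorption
  have habs : AUEquiv (fun a => s₁ * ψ a * star s₁ + s₂ * Φ a * star s₂) ψ :=
    hψ Φ s₁ s₂ hs₁iso hs₂iso horth hsum
  unfold AUEquiv at habs
  obtain ⟨u, huu, hua⟩ := habs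
  have hu0 := Unitary.mem_iff.mp (huu 0)
  refine ⟨fun n => u 0 * s₂ * T n, ?_, ?_, ?_⟩
  · intro n
    show star (u 0 * s₂ * T n) * (u 0 * s₂ * T n) = 1
    rw [star_mul, star_mul]
    calc star (T n) * (star s₂ * star (u 0)) * (u 0 * s₂ * T n)
        = star (T n) * (star s₂ * ((star (u 0) * u 0) * s₂ * T n)) := by
          simp only [mul_assoc]
      _ = star (T n) * (star s₂ * (s₂ * T n)) := by rw [hu0.1, one_mul]
      _ = star (T n) * ((star s₂ * s₂) * T n) := by rw [mul_assoc]
      _ = star (T n) * T n := by rw [hs₂iso, one_mul]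
      _ = 1 := hTiso n
  · intro i j hij
    show star (u 0 * s₂ * T j) * (u 0 * s₂ * T i) = 0
    rw [star_mul, star_mul]
    calc star (T j) * (star s₂ * star (u 0)) * (u 0 * s₂ * T i)
        = star (T j) * (star s₂ * ((star (u 0) * u 0) * s₂ * T i)) := by
          simp only [mul_assoc]
      _ = star (T j) * (star s₂ * (s₂ * T i)) := by rw [hu0.1, one_mul]
      _ = star (T j) * ((star s₂ * s₂) * T i) := by rw [mul_assoc]
      _ = star (T j) * T i := by rw [hs₂iso, one_mul]
      _ = 0 := hTorth i j hij
  · intro a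
    obtain ⟨b, hb⟩ := (hua a).1 0
    -- hb : DoubleCentralizer.coe ℂ b = ψ a - u 0 * (π a) * star (u 0)
    have hπs : (s₁ * ψ a * star s₁ + s₂ * Φ a * star s₂) * s₂ = s₂ * Φ a := by
      rw [add_mul, mul_assoc (s₁ * ψ a), horth, mul_zero, zero_add,
        mul_assoc (s₂ * Φ a), hs₂iso, mul_one]
    have hw : (u 0 * s₂) * Φ a
        = (u 0 * (s₁ * ψ a * star s₁ + s₂ * Φ a * star s₂) * star (u 0)) * (u 0 * s₂) := by
      calc (u 0 * s₂) * Φ a = u 0 * (s₂ * Φ a) := mul_assoc _ _ _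
        _ = u 0 * ((s₁ * ψ a * star s₁ + s₂ * Φ a * star s₂) * s₂) := by rw [hπs]
        _ = (u 0 * (s₁ * ψ a * star s₁ + s₂ * Φ a * star s₂)) * s₂ := (mul_assoc _ _ _).symm
        _ = (u 0 * (s₁ * ψ a * star s₁ + s₂ * Φ a * star s₂) * star (u 0)) * (u 0 * s₂) := by
            rw [mul_assoc (u 0 * (s₁ * ψ a * star s₁ + s₂ * Φ a * star s₂)) (star (u 0))
              (u 0 * s₂), ← mul_assoc (star (u 0)) (u 0) s₂, hu0.1, one_mul]
    have he2 : ιm (-b) = u 0 * (s₁ * ψ a * star s₁ + s₂ * Φ a * star s₂) * star (u 0) - ψ a := by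
      have h1 : ιm (-b) = -ιm b := by rw [← ιh_apply, ← ιh_apply, map_neg]
      have h2 : ιm b = ψ a - u 0 * (s₁ * ψ a * star s₁ + s₂ * Φ a * star s₂) * star (u 0) := hb
      rw [h1, h2, neg_sub]
    have hkey : ∀ n, (u 0 * s₂ * T n) * Φ a - ψ a * (u 0 * s₂ * T n)
        = ιm (-b) * (u 0 * s₂ * T n) := by
      intro n
      have e1 : (u 0 * s₂ * T n) * Φ a = ((u 0 * s₂) * Φ a) * T n := by
        rw [mul_assoc (u 0 * s₂) (T n) (Φ a), hTΦ a n, ← mul_assoc]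
      rw [e1, hw, he2, sub_mul,
        mul_assoc (u 0 * (s₁ * ψ a * star s₁ + s₂ * Φ a * star s₂) * star (u 0)) (u 0 * s₂) (T n)]
    constructor
    · intro n
      show (u 0 * s₂ * T n) * Φ a - ψ a * (u 0 * s₂ * T n) ∈ canonicalIdeal A₀
      rw [hkey n, ιm_mul]
      exact ⟨_, rfl⟩
    · have hbnd : ∀ n, ‖(u 0 * s₂ * T n) * Φ a - ψ a * (u 0 * s₂ * T n)‖
          ≤ ‖ιm ((u 0 * s₂ : 𝓜(ℂ, A₀)).snd (-b)) *
              ((1 : 𝓜(ℂ, A₀)) - ∑ i ∈ Finset.range n, S i * star (S i))‖ := by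
        intro n
        have e3 : ιm (-b) * (u 0 * s₂ * T n)
            = (ιm ((u 0 * s₂ : 𝓜(ℂ, A₀)).snd (-b)) *
                ((1 : 𝓜(ℂ, A₀)) - ∑ i ∈ Finset.range n, S i * star (S i))) * T n := by
          calc ιm (-b) * (u 0 * s₂ * T n)
              = (ιm (-b) * (u 0 * s₂)) * T n := (mul_assoc _ _ _).symm
            _ = ιm ((u 0 * s₂ : 𝓜(ℂ, A₀)).snd (-b)) * T n := by rw [ιm_mul]
            _ = ιm ((u 0 * s₂ : 𝓜(ℂ, A₀)).snd (-b)) *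
                  (((1 : 𝓜(ℂ, A₀)) - ∑ i ∈ Finset.range n, S i * star (S i)) * T n) := by
                rw [hQT n]
            _ = _ := (mul_assoc _ _ _).symm
        rw [hkey n, e3]
        calc ‖(ιm ((u 0 * s₂ : 𝓜(ℂ, A₀)).snd (-b)) *
                ((1 : 𝓜(ℂ, A₀)) - ∑ i ∈ Finset.range n, S i * star (S i))) * T n‖
            ≤ ‖ιm ((u 0 * s₂ : 𝓜(ℂ, A₀)).snd (-b)) *
                ((1 : 𝓜(ℂ, A₀)) - ∑ i ∈ Finset.range n, S i * star (S i))‖ * ‖T n‖ :=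
              norm_mul_le _ _
          _ ≤ ‖ιm ((u 0 * s₂ : 𝓜(ℂ, A₀)).snd (-b)) *
                ((1 : 𝓜(ℂ, A₀)) - ∑ i ∈ Finset.range n, S i * star (S i))‖ * 1 :=
              mul_le_mul_of_nonneg_left (hTn n) (norm_nonneg _)
          _ = _ := mul_one _
      exact squeeze_zero (fun n => norm_nonneg _) hbnd
        (hS3' ((u 0 * s₂ : 𝓜(ℂ, A₀)).snd (-b))).2
end

section
/- Let A be a unital C*-algebra, I a closed two-sided ideal of A, and p, q projections in A with ‖p − q‖ < 1 and p − q ∈ I. Then z = pq + (1−p)(1−q) is an invertible element of A lying in 1 + I, it satisfies pz = zq, and the unitary v = z(z*z)^{−1/2} from the polar decomposition of z lies in 1 + I and satisfies v q v* = p. -/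
/-!
STATEMENT 8: Let `A` be a unital C*-algebra, `I` a closed two-sided ideal of `A`, and `p, q`
projections in `A` with `‖p − q‖ < 1` and `p − q ∈ I`.  Then `z = pq + (1−p)(1−q)` is an
invertible element of `A` lying in `1 + I`, it satisfies `pz = zq`, and the unitary
`v = z (z*z)^{−1/2}` from the polar decomposition of `z` lies in `1 + I` and satisfies
`v q v* = p`.  Here `(z*z)^{-1/2}` is realized through the continuous functional calculus of
the positive invertible element `z* z`.
-/

open Pointwise

open Polynomial in
lemma my_commute_cfc {A : Type*} [CStarAlgebra A] {a b : A}
    (h : Commute b a) (f : ℝ → ℝ) : Commute b (cfc f a) := by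
  refine cfc_cases (fun x => Commute b x) a f (Commute.zero_right _) fun hf ha => ?_
  set φ := cfcHom (R := ℝ) ha with hφ
  have hcont : Continuous φ := (cfcHom_isClosedEmbedding ha).continuous
  have key : ∀ g : C(spectrum ℝ a, ℝ), Commute b (φ g) := by
    intro g
    induction g using ContinuousMap.induction_on_of_compact with
    | const r =>
      have : φ (ContinuousMap.const _ r) = algebraMap ℝ A r := by
        exact AlgHomClass.commutes φ r
      rw [this]
      exact Algebra.commute_algebraMap_right r b
    | id => rw [cfcHom_id ha]; exact h
    | star_id => rw [star_trivial, cfcHom_id ha]; exact h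
    | add f g hf hg => rw [map_add]; exact hf.add_right hg
    | mul f g hf hg => rw [map_mul]; exact hf.mul_right hg
    | frequently f hf =>
      have hcl : IsClosed {g : C(spectrum ℝ a, ℝ) | Commute b (φ g)} := by
        have : {g : C(spectrum ℝ a, ℝ) | Commute b (φ g)} =
            (fun g => b * φ g - φ g * b) ⁻¹' {0} := by
          ext g; simp [Commute, SemiconjBy, sub_eq_zero]
        rw [this]
        exact (isClosed_singleton).preimage (by continuity)
      exact hcl.mem_of_frequently_of_tendsto hf Filter.tendsto_id
  exact key _

theorem stmt8 {A : Type*} [CStarAlgebra A]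
    (I : TwoSidedIdeal A) (hI : IsClosed (I : Set A))
    (p q : A)
    (hp : IsSelfAdjoint p ∧ IsIdempotentElem p)
    (hq : IsSelfAdjoint q ∧ IsIdempotentElem q)
    (hnorm : ‖p - q‖ < 1) (hpq : p - q ∈ I) :
    letI z : A := p * q + (1 - p) * (1 - q)
    letI v : A := z * cfc (fun t : ℝ => (Real.sqrt t)⁻¹) (star z * z)
    IsUnit z ∧ z - 1 ∈ I ∧ p * z = z * q ∧
      v ∈ unitary A ∧ v - 1 ∈ I ∧ v * q * star v = p := by
  rcases subsingleton_or_nontrivial A with hA | hA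
  · refine ⟨isUnit_of_subsingleton _, ?_, Subsingleton.elim _ _, ?_, ?_, Subsingleton.elim _ _⟩
    · have h0 : ∀ x : A, x ∈ I := fun x => by
        rw [Subsingleton.elim x (0:A)]; exact I.zero_mem
      exact h0 _
    · exact Unitary.mem_iff.mpr ⟨Subsingleton.elim _ _, Subsingleton.elim _ _⟩
    · have h0 : ∀ x : A, x ∈ I := fun x => by
        rw [Subsingleton.elim x (0:A)]; exact I.zero_mem
      exact h0 _
  obtain ⟨hp1, hp2⟩ := hp
  obtain ⟨hq1, hq2⟩ := hq
  have hpp : p * p = p := hp2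
  have hqq : q * q = q := hq2
  have hpp' : ∀ x : A, p * (p * x) = p * x := fun x => by rw [← mul_assoc, hpp]
  have hqq' : ∀ x : A, q * (q * x) = q * x := fun x => by rw [← mul_assoc, hqq]
  set z : A := p * q + (1 - p) * (1 - q) with hzdef
  set d : A := (p - q) * (p - q) with hddef
  have hzstar : star z = q * p + (1 - q) * (1 - p) := by
    simp [hzdef, star_add, star_mul, star_sub, star_one, hp1.star_eq, hq1.star_eq]
  have hzz : star z * z = 1 - d := by
    rw [hzstar, hzdef, hddef]
    simp only [mul_sub, sub_mul, mul_add, add_mul, mul_one, one_mul, mul_assoc,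
      hpp, hqq, hpp', hqq']
    abel
  have hzz' : z * star z = 1 - d := by
    rw [hzstar, hzdef, hddef]
    simp only [mul_sub, sub_mul, mul_add, add_mul, mul_one, one_mul, mul_assoc,
      hpp, hqq, hpp', hqq']
    abel
  have hpzq : p * z = z * q := by
    rw [hzdef]
    simp only [mul_sub, sub_mul, mul_add, add_mul, mul_one, one_mul, mul_assoc,
      hpp, hqq, hpp', hqq']
    abel
  -- ideal memberships
  have hz1I : z - 1 ∈ I := by
    have h1 : z - 1 = p * (q - p) + (p - q) * q := by
      rw [hzdef]
      simp only [mul_sub, sub_mul, mul_add, add_mul, mul_one, one_mul, mul_assoc,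
        hpp, hqq, hpp', hqq']
      abel
    rw [h1]
    exact I.add_mem (I.mul_mem_left _ _ (by simpa using I.neg_mem hpq))
      (I.mul_mem_right _ _ hpq)
  have hdI : d ∈ I := I.mul_mem_right _ _ hpq
  -- invertibility
  have hdnorm : ‖d‖ < 1 := by
    have h2 : ‖d‖ = ‖p - q‖ * ‖p - q‖ := by
      calc ‖d‖ = ‖star (p - q) * (p - q)‖ := by rw [(hp1.sub hq1).star_eq]
        _ = ‖p - q‖ * ‖p - q‖ := CStarRing.norm_star_mul_self
    rw [h2]
    nlinarith [norm_nonneg (p - q)]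
  have haU : IsUnit (star z * z) := by
    rw [hzz]; exact (Units.oneSub d hdnorm).isUnit
  have haU' : IsUnit (z * star z) := by rw [hzz', ← hzz]; exact haU
  have hza : Commute z (star z * z) := by
    rw [Commute, SemiconjBy, ← mul_assoc, hzz', hzz]
  have hzU : IsUnit z := by
    rw [isUnit_iff_exists]
    have hcomm : Commute z ↑haU.unit⁻¹ := by
      refine Commute.units_inv_right ?_
      rw [haU.unit_spec]; exact hza
    refine ⟨star z * ↑haU.unit⁻¹, ?_, ?_⟩
    · rw [← mul_assoc, hzz', ← hzz]
      exact haU.mul_val_inv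
    · rw [mul_assoc, ← hcomm.eq, ← mul_assoc]
      exact haU.mul_val_inv
  -- cfc setup
  set a := star z * z with hadef
  have ha' : IsSelfAdjoint a := IsSelfAdjoint.star_mul_self z
  have hσpos : ∀ t ∈ spectrum ℝ a, 0 < t := by
    intro t ht
    rw [hzz] at ht
    have ht' : t ∈ ({(1:ℝ)} : Set ℝ) - spectrum ℝ d := by
      rw [spectrum.singleton_sub_eq]
      simpa using ht
    obtain ⟨r, hr, s, hs, hrs⟩ := ht'
    rw [Set.mem_singleton_iff] at hr
    subst hr
    have hsd : ‖s‖ ≤ ‖d‖ := spectrum.norm_le_norm_of_mem hs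
    have : |s| < 1 := lt_of_le_of_lt (by simpa using hsd) hdnorm
    have habs := abs_lt.mp this
    have ht2 : t = 1 - s := by simpa using hrs.symm
    rw [ht2]; linarith
  have hfc : ContinuousOn (fun t : ℝ => (Real.sqrt t)⁻¹) (spectrum ℝ a) :=
    ContinuousOn.inv₀ Real.continuous_sqrt.continuousOn
      (fun t ht => Real.sqrt_ne_zero'.mpr (hσpos t ht))
  set w : A := cfc (fun t : ℝ => (Real.sqrt t)⁻¹) a with hwdef
  have hwsa : IsSelfAdjoint w := cfc_predicate _ a
  have haid : cfc (fun t : ℝ => t) a = a := cfc_id' ℝ a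
  -- key cfc identities
  have htf : ContinuousOn (fun t : ℝ => t * (Real.sqrt t)⁻¹) (spectrum ℝ a) :=
    continuous_id.continuousOn.mul hfc
  have hff : ContinuousOn (fun t : ℝ => (Real.sqrt t)⁻¹ * (Real.sqrt t)⁻¹) (spectrum ℝ a) :=
    hfc.mul hfc
  have hwaw : w * (a * w) = 1 := by
    have e2 : cfc (fun t : ℝ => t * (Real.sqrt t)⁻¹) a = a * w := by
      rw [cfc_mul _ _ a (by fun_prop) hfc, haid, ← hwdef]
    have e1 : cfc (fun t : ℝ => (Real.sqrt t)⁻¹ * (t * (Real.sqrt t)⁻¹)) a = w * (a * w) := by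
      rw [cfc_mul _ _ a hfc htf, e2, ← hwdef]
    rw [← e1, cfc_congr (g := fun _ : ℝ => 1) (fun t ht => ?_), cfc_const_one ℝ a]
    have h0 : (0:ℝ) < t := hσpos t ht
    have hs : Real.sqrt t * Real.sqrt t = t := Real.mul_self_sqrt h0.le
    have h1 : Real.sqrt t ≠ 0 := Real.sqrt_ne_zero'.mpr h0
    field_simp
    rw [Real.sq_sqrt h0.le]
  have hwwa : w * w * a = 1 := by
    have e3 : cfc (fun t : ℝ => (Real.sqrt t)⁻¹ * (Real.sqrt t)⁻¹) a = w * w := by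
      rw [cfc_mul _ _ a hfc hfc, ← hwdef]
    have e4 : cfc (fun t : ℝ => (Real.sqrt t)⁻¹ * (Real.sqrt t)⁻¹ * t) a = w * w * a := by
      rw [cfc_mul _ _ a hff (by fun_prop), e3, haid]
    rw [← e4, cfc_congr (g := fun _ : ℝ => 1) (fun t ht => ?_), cfc_const_one ℝ a]
    have h0 : (0:ℝ) < t := hσpos t ht
    have hs : Real.sqrt t * Real.sqrt t = t := Real.mul_self_sqrt h0.le
    have h1 : Real.sqrt t ≠ 0 := Real.sqrt_ne_zero'.mpr h0
    field_simp
    rw [Real.sq_sqrt h0.le]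
  have hzw : Commute z w := my_commute_cfc hza _
  have hzwwz : z * (w * w) * star z = 1 := by
    have e5 : z * (w * w) = w * w * z := ((hzw.mul_right hzw)).eq
    rw [e5, mul_assoc, mul_assoc, ← mul_assoc w, hzz', ← hzz]
    exact hwwa
  -- unitary
  have hvstar : star (z * w) = w * star z := by rw [star_mul, hwsa.star_eq]
  have hvmem : z * w ∈ unitary A := by
    rw [Unitary.mem_iff, hvstar]
    constructor
    · calc w * star z * (z * w) = w * (star z * z * w) := by noncomm_ring
        _ = w * (a * w) := by rw [← hadef]
        _ = 1 := hwaw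
    · calc z * w * (w * star z) = z * (w * w) * star z := by noncomm_ring
        _ = 1 := hzwwz
  -- w - 1 ∈ I
  have hw1I : w - 1 ∈ I := by
    have hkc : ContinuousOn
        (fun t : ℝ => (Real.sqrt t * (1 + Real.sqrt t))⁻¹) (spectrum ℝ a) := by
      refine ContinuousOn.inv₀ (by fun_prop) fun t ht => ?_
      have h0 : (0:ℝ) < t := hσpos t ht
      have h1 : (0:ℝ) < Real.sqrt t := Real.sqrt_pos.mpr h0
      positivity
    have h1a : cfc (fun t : ℝ => 1 - t) a = 1 - a := by
      rw [cfc_sub _ _ a (by fun_prop) (by fun_prop), cfc_const_one ℝ a, haid]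
    have key : w - 1 =
        (1 - a) * cfc (fun t : ℝ => (Real.sqrt t * (1 + Real.sqrt t))⁻¹) a := by
      rw [hwdef, ← h1a, ← cfc_mul _ _ a (by fun_prop) hkc, ← cfc_const_one ℝ a,
        ← cfc_sub _ _ a hfc (by fun_prop)]
      refine cfc_congr fun t ht => ?_
      have h0 : (0:ℝ) < t := hσpos t ht
      have h1 : (0:ℝ) < Real.sqrt t := Real.sqrt_pos.mpr h0
      have hs : Real.sqrt t * Real.sqrt t = t := Real.mul_self_sqrt h0.le
      field_simp
      nlinarith [hs]
    rw [key]
    have e6 : (1 : A) - a = d := by rw [hzz]; exact sub_sub_cancel 1 d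
    rw [e6]
    exact I.mul_mem_right _ _ hdI
  -- remaining pieces
  have hv1I : z * w - 1 ∈ I := by
    have e7 : z * w - 1 = (z - 1) * w + (w - 1) := by noncomm_ring
    rw [e7]
    exact I.add_mem (I.mul_mem_right _ _ hz1I) hw1I
  have hqd : q * d = d * q := by
    rw [hddef]
    simp only [mul_sub, sub_mul, mul_add, add_mul, mul_one, one_mul, mul_assoc,
      hpp, hqq, hpp', hqq']
    abel
  have hqa : Commute q a := by
    rw [Commute, SemiconjBy, hzz, mul_sub, sub_mul, mul_one, one_mul, hqd]
  have hwq : w * q = q * w := (my_commute_cfc hqa _).symm.eq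
  have hfinal : (z * w) * q * star (z * w) = p := by
    rw [hvstar]
    calc z * w * q * (w * star z) = z * (w * q) * w * star z := by noncomm_ring
      _ = z * (q * w) * w * star z := by rw [hwq]
      _ = (z * q) * (w * w) * star z := by noncomm_ring
      _ = (p * z) * (w * w) * star z := by rw [← hpzq]
      _ = p * (z * (w * w) * star z) := by noncomm_ring
      _ = p := by rw [hzwwz, mul_one]
  exact ⟨hzU, hz1I, hpzq, hvmem, hv1I, hfinal⟩
end

section
/- Let A be a unital C*-algebra, X a metric space, and f: X → A a norm-continuous function such that each f(t) is self-adjoint with 0 ≤ f(t) ≤ 1. Fix t_0 ∈ X and suppose z ∈ (0, 1/4) satisfies z ∉ σ(f(t_0) − f(t_0)²). Then there exist δ > 0 and real numbers 0 < a < b < 1 such that σ(f(s)) ⊆ [0, a) ∪ (b, 1] for every s ∈ X with d(s, t_0) < δ. -/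
/-!
STATEMENT 10: Let `A` be a unital C*-algebra, `X` a metric space, and `f : X → A` a
norm-continuous function such that each `f t` is self-adjoint with `0 ≤ f t ≤ 1` (spectrum
in `[0,1]`).  Fix `t₀ ∈ X` and suppose `z ∈ (0, 1/4)` satisfies `z ∉ σ(f t₀ − f t₀ ²)`.
Then there exist `δ > 0` and real numbers `0 < a < b < 1` such that
`σ(f s) ⊆ [0, a) ∪ (b, 1]` for every `s ∈ X` with `dist s t₀ < δ`.
-/

theorem stmt10 {A : Type*} [CStarAlgebra A] {X : Type*} [MetricSpace X]
    (f : X → A) (hf : Continuous f)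
    (hsa : ∀ t, IsSelfAdjoint (f t)) (hspec : ∀ t, spectrum ℝ (f t) ⊆ Set.Icc 0 1)
    (t₀ : X) (z : ℝ) (hz : z ∈ Set.Ioo 0 (1 / 4))
    (hz' : z ∉ spectrum ℝ (f t₀ - f t₀ ^ 2)) :
    ∃ δ > (0 : ℝ), ∃ a b : ℝ, 0 < a ∧ a < b ∧ b < 1 ∧
      ∀ s : X, dist s t₀ < δ → spectrum ℝ (f s) ⊆ Set.Ico 0 a ∪ Set.Ioc b 1 := by
  obtain ⟨hz0, hz4⟩ := hz
  rcases subsingleton_or_nontrivial A with hA | hA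
  · exact ⟨1, one_pos, 1/3, 1/2, by norm_num, by norm_num, by norm_num,
      fun s _ lam hlam => (spectrum.notMem_iff.mpr (isUnit_of_subsingleton _) hlam).elim⟩
  -- the left root of λ - λ² = z
  set r : ℝ := Real.sqrt (1 - 4 * z) with hr_def
  have hr_sq : r ^ 2 = 1 - 4 * z := Real.sq_sqrt (by linarith)
  have hr_pos : 0 < r := Real.sqrt_pos.mpr (by linarith)
  have hr_lt : r < 1 := by nlinarith [hr_sq, hr_pos]
  set α : ℝ := (1 - r) / 2 with hα_def
  have hα_pos : 0 < α := by simp only [hα_def]; linarith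
  have hα_lt : α < 1 / 2 := by simp only [hα_def]; linarith
  have hqα : α - α ^ 2 = z := by simp only [hα_def]; nlinarith [hr_sq]
  -- the unit `z - g t₀`
  have hu : IsUnit (algebraMap ℝ A z - (f t₀ - f t₀ ^ 2)) := spectrum.notMem_iff.mp hz'
  set x : Aˣ := hu.unit with hx_def
  have hx_val : (x : A) = algebraMap ℝ A z - (f t₀ - f t₀ ^ 2) := rfl
  set c : ℝ := ‖((x⁻¹ : Aˣ) : A)‖⁻¹ with hc_def
  have hc_pos : 0 < c := inv_pos.mpr (Units.norm_pos x⁻¹)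
  set η : ℝ := c / 3 with hη_def
  have hη_pos : 0 < η := by positivity
  -- continuity of `s ↦ f s - f s ^ 2` at `t₀`
  have hg : Continuous fun s => f s - f s ^ 2 := hf.sub (hf.pow 2)
  obtain ⟨δ, hδ_pos, hδ⟩ := Metric.continuousAt_iff.mp hg.continuousAt η hη_pos
  -- continuity of `q : λ ↦ λ - λ²` at `α`
  have hq : Continuous fun t : ℝ => t - t ^ 2 := continuous_id.sub (continuous_pow 2)
  obtain ⟨ρ, hρ_pos, hρ⟩ := Metric.continuousAt_iff.mp hq.continuousAt η hη_pos
  set ρ' : ℝ := min ρ (min α (1 - α)) with hρ'_def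
  have hρ'ρ : ρ' ≤ ρ := min_le_left _ _
  have hρ'α : ρ' ≤ α := le_trans (min_le_right _ _) (min_le_left _ _)
  have hρ'1α : ρ' ≤ 1 - α := le_trans (min_le_right _ _) (min_le_right _ _)
  have hρ'_pos : 0 < ρ' := lt_min hρ_pos (lt_min hα_pos (by linarith))
  refine ⟨δ, hδ_pos, α - ρ' / 2, α + ρ' / 2, by linarith, by linarith, by linarith, ?_⟩
  intro s hs lam hlam
  have hlam01 : lam ∈ Set.Icc (0 : ℝ) 1 := hspec s hlam
  -- spectral mapping gives `lam - lam ^ 2 ∈ σ (f s - f s ^ 2)`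
  have hmap : lam - lam ^ 2 ∈ spectrum ℝ (f s - f s ^ 2) := by
    have h1 : f s - f s ^ 2 = cfc (fun t : ℝ => t - t ^ 2) (f s) := by
      rw [cfc_sub _ _ _ (by fun_prop) (by fun_prop), cfc_id' ℝ (f s) (hsa s),
        cfc_pow_id (f s) 2 (hsa s)]
    rw [h1, cfc_map_spectrum _ _ (hsa s)]
    exact ⟨lam, hlam, rfl⟩
  -- `lam - lam ^ 2` stays at distance `≥ η` from `z`
  have hfar : η ≤ |lam - lam ^ 2 - z| := by
    by_contra hcon
    push_neg at hcon
    have hnear : ‖(algebraMap ℝ A (lam - lam ^ 2) - (f s - f s ^ 2)) - (x : A)‖ < c := by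
      have heq : (algebraMap ℝ A (lam - lam ^ 2) - (f s - f s ^ 2)) - (x : A)
          = algebraMap ℝ A (lam - lam ^ 2 - z) + ((f t₀ - f t₀ ^ 2) - (f s - f s ^ 2)) := by
        rw [hx_val]; simp only [map_sub]; abel
      have hdist : ‖(f s - f s ^ 2) - (f t₀ - f t₀ ^ 2)‖ < η := by
        have := hδ hs
        rwa [dist_eq_norm] at this
      calc ‖(algebraMap ℝ A (lam - lam ^ 2) - (f s - f s ^ 2)) - (x : A)‖
          ≤ ‖algebraMap ℝ A (lam - lam ^ 2 - z)‖ + ‖(f t₀ - f t₀ ^ 2) - (f s - f s ^ 2)‖ := by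
            rw [heq]; exact norm_add_le _ _
        _ < η + η := by
            rw [norm_algebraMap', Real.norm_eq_abs, ← norm_sub_rev]
            exact add_lt_add hcon hdist
        _ ≤ c := by rw [hη_def]; linarith
    exact spectrum.notMem_iff.mpr (x.ofNearby _ hnear).isUnit hmap
  -- conclude: `lam` avoids the interval `[α - ρ'/2, α + ρ'/2]`
  have hout : lam < α - ρ' / 2 ∨ α + ρ' / 2 < lam := by
    by_contra hcon
    push_neg at hcon
    have hclose : dist lam α < ρ := by
      rw [Real.dist_eq]
      have : |lam - α| ≤ ρ' / 2 := abs_le.mpr ⟨by linarith [hcon.1], by linarith [hcon.2]⟩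
      linarith
    have := hρ hclose
    rw [Real.dist_eq, hqα] at this
    exact absurd this (not_lt.mpr hfar)
  rcases hout with h | h
  · exact Or.inl ⟨hlam01.1, h⟩
  · exact Or.inr ⟨h, hlam01.2⟩
end
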